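/- Let k ≥ 2. For each j ∈ {0,…,k}, define a map κ_j from the vertices of ST_k^2 to the vertices of ST_{k+1}^2 by κ_j(v_0v_1⋯v_{2k−1}) = w_0w_1⋯w_{2k−1} j j, where w_i = (v_i + j + 1) mod (k+1) for 0 ≤ i ≤ 2k−1. Then each κ_j is a well-defined injective map whose image induces a subgraph of ST_{k+1}^2 isomorphic to ST_k^2 via κ_j (u and v are adjacent in ST_k^2 if and only if κ_j(u) and κ_j(v) are adjacent in ST_{k+1}^2), and the images of κ_0,…,κ_k are pairwise disjoint. -/

import Mathlib

/-- A string of length `k*l` over the alphabet `Fin k` in which every symbol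
occurs exactly `l` times (an `l`-set permutation). -/
def IsMSP (k l : ℕ) (v : Fin (k * l) → Fin k) : Prop :=
  ∀ a : Fin k, (Finset.univ.filter fun i => v i = a).card = l

/-- The vertex set of the star `l`-set transposition graph `ST_k^l`. -/
abbrev MSP (k l : ℕ) : Type := {v : Fin (k * l) → Fin k // IsMSP k l v}

/-- Star-transposition adjacency: `w` is obtained from `v` by transposing position `0`
with a position `i ≠ 0` whose entry differs from that of position `0`. -/
def STAdj (k l : ℕ) (v w : Fin (k * l) → Fin k) : Prop :=
  ∃ i j : Fin (k * l), (j : ℕ) = 0 ∧ i ≠ j ∧ v i ≠ v j ∧ w = v ∘ Equiv.swap j i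

/-- The star `l`-set transposition graph `ST_k^l`. -/
def STGraph (k l : ℕ) : SimpleGraph (MSP k l) :=
  SimpleGraph.fromRel fun v w => STAdj k l v.1 w.1

/-- The map `κ_j : V(ST_k^2) → V(ST_{k+1}^2)`,
`κ_j(v_0 ⋯ v_{2k-1}) = w_0 ⋯ w_{2k-1} j j` with `w_i = (v_i + j + 1) mod (k+1)`. -/
def kappa (k : ℕ) (j : Fin (k + 1)) (v : Fin (k * 2) → Fin k) :
    Fin ((k + 1) * 2) → Fin (k + 1) :=
  fun i => if h : (i : ℕ) < k * 2 then Fin.ofNat (k + 1) ((v ⟨i, h⟩ : ℕ) + (j : ℕ) + 1 : ℕ) else j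

lemma mod2 (x n : ℕ) (hn : 0 < n) (h : x < 2 * n) :
    x % n = if x < n then x else x - n := by
  split
  · exact Nat.mod_eq_of_lt ‹_›
  · rw [Nat.mod_eq_sub_mod (by omega), Nat.mod_eq_of_lt (by omega)]

lemma shift_val (k : ℕ) (j : Fin (k+1)) (b : Fin k) :
    ((Fin.ofNat (k+1) ((b:ℕ) + (j:ℕ) + 1 : ℕ)) : ℕ)
      = if (b:ℕ) + j + 1 < k + 1 then (b:ℕ) + j + 1 else (b:ℕ) + j + 1 - (k+1) := by
  rw [Fin.val_ofNat, mod2 _ _ (by omega) (by have := b.isLt; have := j.isLt; omega)]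

lemma shift_inj (k : ℕ) (j : Fin (k+1)) {b c : Fin k}
    (h : (Fin.ofNat (k+1) ((b:ℕ) + (j:ℕ) + 1 : ℕ)) = (Fin.ofNat (k+1) ((c:ℕ) + (j:ℕ) + 1 : ℕ))) :
    b = c := by
  have hv := congrArg Fin.val h
  rw [shift_val, shift_val] at hv
  have hb := b.isLt; have hc := c.isLt
  apply Fin.ext
  split at hv <;> split at hv <;> omega

lemma shift_ne (k : ℕ) (j : Fin (k+1)) (b : Fin k) :
    (Fin.ofNat (k+1) ((b:ℕ) + (j:ℕ) + 1 : ℕ)) ≠ j := by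
  intro h
  have hv := congrArg Fin.val h
  rw [shift_val] at hv
  have hb := b.isLt; have hj := j.isLt
  split at hv <;> omega

lemma shift_surj (k : ℕ) (j a : Fin (k+1)) (ha : a ≠ j) :
    ∃ b : Fin k, (Fin.ofNat (k+1) ((b:ℕ) + (j:ℕ) + 1 : ℕ)) = a := by
  have hj := j.isLt; have haa := a.isLt
  have hane : (a:ℕ) ≠ (j:ℕ) := fun h => ha (Fin.ext h)
  have hb : ((a:ℕ) + k - j) % (k+1) < k := by
    rw [mod2 _ _ (by omega) (by omega)]
    split <;> omega
  refine ⟨⟨((a:ℕ) + k - j) % (k+1), hb⟩, ?_⟩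
  apply Fin.ext
  rw [shift_val]
  simp only
  rw [mod2 _ _ (by omega) (by omega)]
  split <;> split <;> omega

lemma kappa_inj (k : ℕ) (j : Fin (k+1)) {v w : Fin (k * 2) → Fin k}
    (h : kappa k j v = kappa k j w) : v = w := by
  funext i
  have hi : (i:ℕ) < k * 2 := i.isLt
  have h2 : (i:ℕ) < (k+1) * 2 := by omega
  have := congrFun h ⟨i, h2⟩
  rw [kappa, kappa] at this
  simp only [dif_pos hi] at this
  exact shift_inj k j this

lemma kappa_last (k : ℕ) (j : Fin (k+1)) (v : Fin (k * 2) → Fin k)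
    (i : Fin ((k+1)*2)) (hi : ¬ (i:ℕ) < k * 2) : kappa k j v i = j := by
  rw [kappa]; simp only [dif_neg hi]

lemma kappa_lt (k : ℕ) (j : Fin (k+1)) (v : Fin (k * 2) → Fin k)
    (i : Fin ((k+1)*2)) (hi : (i:ℕ) < k * 2) :
    kappa k j v i = (Fin.ofNat (k+1) ((v ⟨i, hi⟩ : ℕ) + (j:ℕ) + 1 : ℕ)) := by
  rw [kappa]; simp only [dif_pos hi]

lemma swap_cast (k : ℕ) (j0 i : Fin (k*2)) (t : Fin ((k+1)*2)) (ht : (t:ℕ) < k*2) :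
    Equiv.swap (⟨(j0:ℕ), by have := j0.isLt; omega⟩ : Fin ((k+1)*2))
        ⟨(i:ℕ), by have := i.isLt; omega⟩ t
      = ⟨((Equiv.swap j0 i ⟨(t:ℕ), ht⟩ : Fin (k*2)) : ℕ),
          by have := (Equiv.swap j0 i ⟨(t:ℕ), ht⟩).isLt; omega⟩ := by
  by_cases h0 : (t:ℕ) = (j0:ℕ)
  · have e1 : t = (⟨(j0:ℕ), by have := j0.isLt; omega⟩ : Fin ((k+1)*2)) := Fin.ext h0
    have e2 : (⟨(t:ℕ), ht⟩ : Fin (k*2)) = j0 := Fin.ext h0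
    apply Fin.ext
    show ((Equiv.swap (⟨(j0:ℕ), _⟩ : Fin ((k+1)*2)) ⟨(i:ℕ), _⟩ t : Fin ((k+1)*2)) : ℕ) = ((Equiv.swap j0 i ⟨(t:ℕ), ht⟩ : Fin (k*2)) : ℕ); rw [e2, e1, Equiv.swap_apply_left, Equiv.swap_apply_left]
  · by_cases h1 : (t:ℕ) = (i:ℕ)
    · have e1 : t = (⟨(i:ℕ), by have := i.isLt; omega⟩ : Fin ((k+1)*2)) := Fin.ext h1
      have e2 : (⟨(t:ℕ), ht⟩ : Fin (k*2)) = i := Fin.ext h1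
      apply Fin.ext
      show ((Equiv.swap (⟨(j0:ℕ), _⟩ : Fin ((k+1)*2)) ⟨(i:ℕ), _⟩ t : Fin ((k+1)*2)) : ℕ) = ((Equiv.swap j0 i ⟨(t:ℕ), ht⟩ : Fin (k*2)) : ℕ); rw [e2, e1, Equiv.swap_apply_right, Equiv.swap_apply_right]
    · have n1 : t ≠ (⟨(j0:ℕ), by have := j0.isLt; omega⟩ : Fin ((k+1)*2)) :=
        fun h => h0 (congrArg Fin.val h)
      have n2 : t ≠ (⟨(i:ℕ), by have := i.isLt; omega⟩ : Fin ((k+1)*2)) :=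
        fun h => h1 (congrArg Fin.val h)
      have n3 : (⟨(t:ℕ), ht⟩ : Fin (k*2)) ≠ j0 := fun h => h0 (congrArg Fin.val h)
      have n4 : (⟨(t:ℕ), ht⟩ : Fin (k*2)) ≠ i := fun h => h1 (congrArg Fin.val h)
      rw [Equiv.swap_apply_of_ne_of_ne n1 n2]; apply Fin.ext; show (t:ℕ) = ((Equiv.swap j0 i ⟨(t:ℕ), ht⟩ : Fin (k*2)) : ℕ); rw [Equiv.swap_apply_of_ne_of_ne n3 n4]

lemma kappa_swap (k : ℕ) (j : Fin (k+1)) (v : Fin (k*2) → Fin k) (j0 i : Fin (k*2)) :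
    kappa k j v ∘ Equiv.swap (⟨(j0:ℕ), by have := j0.isLt; omega⟩ : Fin ((k+1)*2))
        ⟨(i:ℕ), by have := i.isLt; omega⟩
      = kappa k j (v ∘ Equiv.swap j0 i) := by
  funext t
  simp only [Function.comp_apply]
  by_cases ht : (t:ℕ) < k * 2
  · rw [swap_cast k j0 i t ht,
      kappa_lt k j v _ ((Equiv.swap j0 i ⟨(t:ℕ), ht⟩).isLt),
      kappa_lt k j _ t ht]
    simp
  · have h1 : t ≠ ⟨(j0:ℕ), by have := j0.isLt; omega⟩ := by
      intro h; exact ht (by rw [h]; exact j0.isLt)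
    have h2 : t ≠ ⟨(i:ℕ), by have := i.isLt; omega⟩ := by
      intro h; exact ht (by rw [h]; exact i.isLt)
    rw [Equiv.swap_apply_of_ne_of_ne h1 h2, kappa_last k j v t ht, kappa_last k j _ t ht]

lemma kappa_msp (k : ℕ) (j : Fin (k+1)) (v : Fin (k * 2) → Fin k)
    (hv : IsMSP k 2 v) : IsMSP (k+1) 2 (kappa k j v) := by
  intro a
  by_cases ha : a = j
  · rw [ha]
    have hset : (Finset.univ.filter fun i => kappa k j v i = j)
        = {(⟨k*2, by omega⟩ : Fin ((k+1)*2)), ⟨k*2+1, by omega⟩} := by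
      ext i
      simp only [Finset.mem_filter, Finset.mem_univ, true_and, Finset.mem_insert,
        Finset.mem_singleton]
      constructor
      · intro h
        by_cases hi : (i:ℕ) < k * 2
        · rw [kappa_lt k j v i hi] at h
          exact absurd h (shift_ne k j _)
        · have hI := i.isLt
          have : (i:ℕ) = k*2 ∨ (i:ℕ) = k*2+1 := by omega
          rcases this with h' | h'
          · exact Or.inl (Fin.ext h')
          · exact Or.inr (Fin.ext h')
      · rintro (h | h)
        · subst h; exact kappa_last k j v _ (by show ¬ k*2 < k*2; omega)
        · subst h; exact kappa_last k j v _ (by show ¬ k*2+1 < k*2; omega)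
    rw [hset, Finset.card_pair (by simp only [ne_eq, Fin.mk.injEq]; omega)]
  · obtain ⟨b, hb⟩ := shift_surj k j a ha
    have hlt : ∀ i : Fin ((k+1)*2), kappa k j v i = a → (i:ℕ) < k * 2 := by
      intro i h
      by_contra hi
      rw [kappa_last k j v i hi] at h
      exact ha h.symm
    have key : (Finset.univ.filter fun i => kappa k j v i = a).card
        = (Finset.univ.filter fun i => v i = b).card := by
      refine Finset.card_bij'
        (fun (i : Fin ((k+1)*2)) hi => (⟨(i:ℕ), hlt i (Finset.mem_filter.mp hi).2⟩ : Fin (k*2)))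
        (fun (i : Fin (k*2)) _ => (⟨(i:ℕ), by have := i.isLt; omega⟩ : Fin ((k+1)*2)))
        ?_ ?_ ?_ ?_
      · intro i hi
        simp only [Finset.mem_filter, Finset.mem_univ, true_and] at hi ⊢
        have := hi
        rw [kappa_lt k j v i (hlt i hi), ← hb] at this
        exact shift_inj k j this
      · intro i hi
        simp only [Finset.mem_filter, Finset.mem_univ, true_and] at hi ⊢
        rw [kappa_lt k j v _ (by exact i.isLt)]
        simp only [Fin.eta]
        rw [hi, hb]
      · intro i hi
        apply Fin.ext
        rfl
      · intro i hi
        apply Fin.ext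
        rfl
    rw [key, hv b]

lemma STAdj_kappa (k : ℕ) (hk : 0 < k) (j : Fin (k+1)) (v w : Fin (k*2) → Fin k) :
    STAdj k 2 v w ↔ STAdj (k+1) 2 (kappa k j v) (kappa k j w) := by
  constructor
  · rintro ⟨i, j0, hj0, hij, hvv, hw⟩
    refine ⟨⟨(i:ℕ), by have := i.isLt; omega⟩, ⟨(j0:ℕ), by have := j0.isLt; omega⟩,
      hj0, ?_, ?_, ?_⟩
    · intro h; exact hij (Fin.ext (show (i:ℕ) = (j0:ℕ) from congrArg (fun t : Fin ((k+1)*2) => (t:ℕ)) h))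
    · rw [kappa_lt k j v _ (show (i:ℕ) < k*2 from i.isLt),
        kappa_lt k j v _ (show (j0:ℕ) < k*2 from j0.isLt)]
      simp only [Fin.eta]
      intro h; exact hvv (shift_inj k j h)
    · rw [hw]
      exact (kappa_swap k j v j0 i).symm
  · rintro ⟨I, J0, hJ0, hIJ, hne, hEq⟩
    have hJlt : (J0:ℕ) < k*2 := by rw [hJ0]; omega
    have hI : (I:ℕ) < k*2 := by
      by_contra hi
      have h1 := congrFun hEq J0
      rw [Function.comp_apply, Equiv.swap_apply_left, kappa_last k j v I hi,
        kappa_lt k j w J0 hJlt] at h1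
      exact shift_ne k j _ h1
    refine ⟨⟨(I:ℕ), hI⟩, ⟨(J0:ℕ), hJlt⟩, hJ0, ?_, ?_, ?_⟩
    · intro h; exact hIJ (Fin.ext (show (I:ℕ) = (J0:ℕ) from congrArg (fun t : Fin (k*2) => (t:ℕ)) h))
    · intro h
      apply hne
      rw [kappa_lt k j v I hI, kappa_lt k j v J0 hJlt]
      exact congrArg (fun b : Fin k => (Fin.ofNat (k+1) ((b:ℕ) + (j:ℕ) + 1 : ℕ))) h
    · apply kappa_inj k j
      rw [hEq]
      exact kappa_swap k j v ⟨(J0:ℕ), hJlt⟩ ⟨(I:ℕ), hI⟩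


/-- each `κ_j` is a well-defined injective map from the vertices of `ST_k^2`
to those of `ST_{k+1}^2`, its image induces a subgraph isomorphic to `ST_k^2` via `κ_j`,
and the images of `κ_0, ..., κ_k` are pairwise disjoint. -/
theorem stmt18 (k : ℕ) (hk : 2 ≤ k) (j : Fin (k + 1)) :
    (∀ v : Fin (k * 2) → Fin k, IsMSP k 2 v → IsMSP (k + 1) 2 (kappa k j v)) ∧
    (∀ v w : Fin (k * 2) → Fin k, IsMSP k 2 v → IsMSP k 2 w →
      kappa k j v = kappa k j w → v = w) ∧
    (∀ v w : MSP k 2,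
      ∀ (hv : IsMSP (k + 1) 2 (kappa k j v.1)) (hw : IsMSP (k + 1) 2 (kappa k j w.1)),
      ((STGraph k 2).Adj v w ↔
        (STGraph (k + 1) 2).Adj ⟨kappa k j v.1, hv⟩ ⟨kappa k j w.1, hw⟩)) ∧
    (∀ j' : Fin (k + 1), j ≠ j' → ∀ v w : Fin (k * 2) → Fin k,
      IsMSP k 2 v → IsMSP k 2 w → kappa k j v ≠ kappa k j' w) := by
  have hk0 : 0 < k := by omega
  refine ⟨fun v hv => kappa_msp k j v hv, fun v w _ _ h => kappa_inj k j h, ?_, ?_⟩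
  · intro v w hv hw
    simp only [STGraph, SimpleGraph.fromRel_adj]
    constructor
    · rintro ⟨hne, h⟩
      refine ⟨?_, ?_⟩
      · intro h'
        exact hne (Subtype.ext (kappa_inj k j (congrArg Subtype.val h')))
      · rcases h with h | h
        · exact Or.inl ((STAdj_kappa k hk0 j v.1 w.1).mp h)
        · exact Or.inr ((STAdj_kappa k hk0 j w.1 v.1).mp h)
    · rintro ⟨hne, h⟩
      refine ⟨fun h' => hne (Subtype.ext (congrArg (fun x : MSP k 2 => kappa k j x.1) h')), ?_⟩
      rcases h with h | h
      · exact Or.inl ((STAdj_kappa k hk0 j v.1 w.1).mpr h)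
      · exact Or.inr ((STAdj_kappa k hk0 j w.1 v.1).mpr h)
  · intro j' hjj v w _ _ h
    have h2 := congrFun h ⟨k*2, by omega⟩
    rw [kappa_last k j v _ (by show ¬ k*2 < k*2; omega),
      kappa_last k j' w _ (by show ¬ k*2 < k*2; omega)] at h2
    exact hjj h2
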